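/- Under the abstract approximation hypotheses, the Lawson-style topology on X/≈ is regular: every subbasic open set containing a point contains a closed neighborhood of the point. Specifically, if [a] ∈ ⇈c then by interpolation there is d ∈ B with c ≪' d ≪' a and [a] ∈ ⇈d ⊆ ↑d ⊆ ⇈c; if [a] ∈ (X/≈) ∖ ↑c then the closed set (X/≈) ∖ ⇈c works provided ↓-closedness holds. -/
import Mathlib


/-- Regularity of the Lawson-style topology on the quotient: every subbasic
open set containing a point contains a closed neighborhood of that point. -/
theorem stmt15 {X : Type*} [Preorder X] (B : Set X) (hB : B.Countable)
    (lll : X → X → Prop)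
    (h1 : ∀ c a, c ∈ B → lll c a → c ≤ a)
    (h2 : ∀ c d a b, c ∈ B → d ∈ B → c ≤ d → lll d a → a ≤ b → lll c b)
    (h3 : ∀ c a, c ∈ B → lll c a → ∃ d ∈ B, lll c d ∧ lll d a)
    (h4 : ∀ a b : X, a ≤ b ↔ ∀ c ∈ B, lll c a → lll c b) :
    let Q := Antisymmetrization X (· ≤ ·)
    let mk : X → Q := toAntisymmetrization (· ≤ ·)
    let dup : X → Set Q := fun c => {q | ∃ a : X, mk a = q ∧ lll c a}
    let up : X → Set Q := fun c => {q | ∃ a : X, mk a = q ∧ c ≤ a}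
    let T : TopologicalSpace Q :=
      TopologicalSpace.generateFrom ((dup '' B) ∪ ((fun c => (up c)ᶜ) '' B))
    ∀ U ∈ (dup '' B) ∪ ((fun c => (up c)ᶜ) '' B), ∀ p ∈ U,
      ∃ V C : Set Q, @IsOpen Q T V ∧ @IsClosed Q T C ∧
        p ∈ V ∧ V ⊆ C ∧ C ⊆ U := by
  intro Q mk dup up T U hU p hp
  have hopen_dup : ∀ c ∈ B, @IsOpen Q T (dup c) := fun c hc =>
    TopologicalSpace.GenerateOpen.basic _ (Or.inl ⟨c, hc, rfl⟩)
  have hopen_upc : ∀ c ∈ B, @IsOpen Q T (up c)ᶜ := fun c hc =>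
    TopologicalSpace.GenerateOpen.basic _ (Or.inr ⟨c, hc, rfl⟩)
  have hclosed_up : ∀ c ∈ B, @IsClosed Q T (up c) := fun c hc => ⟨hopen_upc c hc⟩
  have hsub : ∀ c ∈ B, dup c ⊆ up c := by
    rintro c hc q ⟨a, ha, hla⟩
    exact ⟨a, ha, h1 c a hc hla⟩
  rcases hU with ⟨c, hc, rfl⟩ | ⟨c, hc, rfl⟩
  · -- U = dup c
    obtain ⟨a, ha, hca⟩ := hp
    obtain ⟨d, hd, hcd, hda⟩ := h3 c a hc hca
    refine ⟨dup d, up d, hopen_dup d hd, hclosed_up d hd, ⟨a, ha, hda⟩, ?_, ?_⟩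
    · rintro q ⟨b, hb, hdb⟩
      exact ⟨b, hb, h1 d b hd hdb⟩
    · rintro q ⟨b, hb, hdb⟩
      exact ⟨b, hb, h2 c c d b hc hc le_rfl hcd hdb⟩
  · -- U = (up c)ᶜ
    set a : X := ofAntisymmetrization (· ≤ ·) p with ha
    have hmka : mk a = p := toAntisymmetrization_ofAntisymmetrization _ p
    have hca : ¬ c ≤ a := fun h => hp ⟨a, hmka, h⟩
    obtain ⟨e, he, hec, hea⟩ : ∃ e ∈ B, lll e c ∧ ¬ lll e a := by
      by_contra h
      push_neg at h
      exact hca ((h4 c a).2 fun e he hec => h e he hec)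
    obtain ⟨f, hf, hef, hfc⟩ := h3 e c he hec
    refine ⟨(up f)ᶜ, (dup f)ᶜ, hopen_upc f hf, ⟨by simpa using hopen_dup f hf⟩,
      ?_, fun q hq hq' => hq (hsub f hf hq'), ?_⟩
    · rintro ⟨b, hb, hfb⟩
      have hba : b ≤ a :=
        toAntisymmetrization_le_toAntisymmetrization_iff.1 (le_of_eq (hb.trans hmka.symm))
      exact hea (h2 e e f a he he le_rfl hef (hfb.trans hba))
    · rintro q hq ⟨b, hb, hcb⟩
      exact hq ⟨b, hb, h2 f f c b hf hf le_rfl hfc hcb⟩
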